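/- For all integers k ≥ 2, n ≥ k and m ≥ 1, the second moment of the number X of NAE-satisfying assignments of F_k(n,m) satisfies E[X^2] ≤ 2^n · Σ_{z=0}^{n} binom(n,z) · f(z/n)^m, where f(α) = 1 − 2^{1−k}·(2 − α^k − (1−α)^k); equivalently, Σ_{F ∈ C_k(n)^m} (number of NAE-satisfying assignments of F)^2 ≤ |C_k(n)|^m · 2^n · Σ_{z=0}^{n} binom(n,z)·f(z/n)^m. -/

import Mathlib

open scoped Classical

/-- A `k`-clause over `n` Boolean variables: a partial assignment of signs to
exactly `k` distinct variables (the literal on variable `i` with sign `b` is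
made true by `σ` iff `σ i = b`). There are `2^k * (n choose k)` such clauses. -/
abbrev Clause (n k : ℕ) : Type :=
  {c : Fin n → Option Bool // (Finset.univ.filter fun i => (c i).isSome).card = k}

/-- `σ` satisfies the clause `c`: some literal of `c` is made true by `σ`. -/
def SatC {n k : ℕ} (σ : Fin n → Bool) (c : Clause n k) : Prop :=
  ∃ i, c.1 i = some (σ i)

/-- `σ` NAE-satisfies the clause `c`: some literal of `c` is made true by `σ`
and some literal of `c` is made false by `σ`. -/
def NAESatC {n k : ℕ} (σ : Fin n → Bool) (c : Clause n k) : Prop :=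
  (∃ i, c.1 i = some (σ i)) ∧ ∃ i, c.1 i = some (!σ i)

/-- A formula (an `m`-tuple of clauses) is satisfiable. -/
def SatFormula {n k m : ℕ} (F : Fin m → Clause n k) : Prop :=
  ∃ σ : Fin n → Bool, ∀ j, SatC σ (F j)

/-- A formula (an `m`-tuple of clauses) is NAE-satisfiable. -/
def NAESatFormula {n k m : ℕ} (F : Fin m → Clause n k) : Prop :=
  ∃ σ : Fin n → Bool, ∀ j, NAESatC σ (F j)

/-- Probability that the random formula `F_k(n,m)` is satisfiable: the fraction
of `m`-tuples of clauses that are satisfiable. -/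
noncomputable def probSat (k n m : ℕ) : ℝ :=
  ((Finset.univ.filter fun F : Fin m → Clause n k => SatFormula F).card : ℝ) /
    (Fintype.card (Fin m → Clause n k) : ℝ)

/-- Probability that the random formula `F_k(n,m)` is NAE-satisfiable. -/
noncomputable def probNAESat (k n m : ℕ) : ℝ :=
  ((Finset.univ.filter fun F : Fin m → Clause n k => NAESatFormula F).card : ℝ) /
    (Fintype.card (Fin m → Clause n k) : ℝ)

/-- The number `X` of NAE-satisfying truth assignments of a formula `F`. -/
noncomputable def numNAE {n k m : ℕ} (F : Fin m → Clause n k) : ℕ :=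
  (Finset.univ.filter fun σ : Fin n → Bool => ∀ j, NAESatC σ (F j)).card

/-- The pair-correlation function `f(α) = 1 - 2^(1-k) (2 - α^k - (1-α)^k)`. -/
noncomputable def fPair (k : ℕ) (α : ℝ) : ℝ :=
  1 - (2 : ℝ) ^ (1 - (k : ℤ)) * (2 - α ^ k - (1 - α) ^ k)

/-! ### Auxiliary counting lemmas -/

/-- The number of clauses all of whose literals are "forced": support inside `S`,
sign on `i` equal to `g i`. -/
lemma nae_card_det (n k : ℕ) (g : Fin n → Bool) (S : Finset (Fin n)) :
    (Finset.univ.filter fun c : Clause n k => ∀ i b, c.1 i = some b → i ∈ S ∧ b = g i).card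
      = S.card.choose k := by
  rw [← Finset.card_powersetCard]
  refine Finset.card_bij' (fun c _ => Finset.univ.filter fun i => ((c : Clause n k).1 i).isSome)
    (fun t ht => (⟨fun i => if i ∈ t then some (g i) else none, by
      rw [show (Finset.univ.filter fun i => (if i ∈ t then some (g i) else none).isSome) = t by
        ext i; simp only [Finset.mem_filter, Finset.mem_univ, true_and]
        split_ifs with h <;> simp [h]]
      exact (Finset.mem_powersetCard.mp ht).2⟩ : Clause n k)) ?_ ?_ ?_ ?_
  · intro c hc
    rw [Finset.mem_powersetCard]
    refine ⟨?_, c.2⟩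
    intro i hi
    simp only [Finset.mem_filter, Finset.mem_univ, true_and, Option.isSome_iff_exists] at hi
    obtain ⟨b, hb⟩ := hi
    exact ((Finset.mem_filter.mp hc).2 i b hb).1
  · intro t ht
    simp only [Finset.mem_filter, Finset.mem_univ, true_and]
    intro i b hb
    by_cases h : i ∈ t
    · rw [if_pos h] at hb
      exact ⟨(Finset.mem_powersetCard.mp ht).1 h, (Option.some_injective _ hb).symm⟩
    · rw [if_neg h] at hb
      exact absurd hb (by simp)
  · intro c hc
    apply Subtype.ext; funext i
    simp only
    by_cases h : (c.1 i).isSome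
    · obtain ⟨b, hb⟩ := Option.isSome_iff_exists.mp h
      rw [if_pos (by simp only [Finset.mem_filter, Finset.mem_univ, true_and]; exact h), hb]
      rw [((Finset.mem_filter.mp hc).2 i b hb).2]
    · rw [if_neg (by simp only [Finset.mem_filter, Finset.mem_univ, true_and]; exact h)]
      exact (Option.not_isSome_iff_eq_none.mp h).symm
  · intro t ht
    ext i
    simp only [Finset.mem_filter, Finset.mem_univ, true_and]
    split_ifs with h <;> simp [h]

/-- Number of clauses all of whose literals agree with `g`. -/
lemma nae_card_forced (n k : ℕ) (g : Fin n → Bool) :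
    (Finset.univ.filter fun c : Clause n k => ∀ i b, c.1 i = some b → b = g i).card
      = n.choose k := by
  have h := nae_card_det n k g Finset.univ
  rw [Finset.card_univ, Fintype.card_fin] at h
  rw [← h]
  congr 1
  apply Finset.filter_congr
  intro c _
  simp only [Finset.mem_univ, true_and]

lemma nae_forced_disjoint (n k : ℕ) (hk : 1 ≤ k) (g h : Fin n → Bool)
    (hne : ∀ i, g i ≠ h i) :
    Disjoint (Finset.univ.filter fun c : Clause n k => ∀ i b, c.1 i = some b → b = g i)
      (Finset.univ.filter fun c : Clause n k => ∀ i b, c.1 i = some b → b = h i) := by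
  rw [Finset.disjoint_left]
  intro c hc hc'
  have hcard := c.2
  have hnonempty : (Finset.univ.filter fun i => (c.1 i).isSome).Nonempty := by
    rw [← Finset.card_pos, hcard]; omega
  obtain ⟨i, hi⟩ := hnonempty
  obtain ⟨b, hb⟩ := Option.isSome_iff_exists.mp (Finset.mem_filter.mp hi).2
  have h1 := (Finset.mem_filter.mp hc).2 i b hb
  have h2 := (Finset.mem_filter.mp hc').2 i b hb
  exact hne i (h1 ▸ h2 ▸ rfl)

/-- Intersection of two forced sets. -/
lemma nae_inter_forced (n k : ℕ) (g h : Fin n → Bool) :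
    (Finset.univ.filter fun c : Clause n k => ∀ i b, c.1 i = some b → b = g i)
        ∩ (Finset.univ.filter fun c : Clause n k => ∀ i b, c.1 i = some b → b = h i)
      = Finset.univ.filter fun c : Clause n k =>
          ∀ i b, c.1 i = some b → i ∈ (Finset.univ.filter fun i => g i = h i) ∧ b = g i := by
  ext c
  simp only [Finset.mem_inter, Finset.mem_filter, Finset.mem_univ, true_and]
  constructor
  · rintro ⟨h1, h2⟩ i b hb
    exact ⟨by rw [← h1 i b hb, ← h2 i b hb], h1 i b hb⟩
  · intro hh
    refine ⟨fun i b hb => (hh i b hb).2, fun i b hb => ?_⟩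
    rw [(hh i b hb).2]
    exact (hh i b hb).1

/-- Characterization of failing to NAE-satisfy a clause. -/
lemma nae_not_nae {n k : ℕ} (σ : Fin n → Bool) (c : Clause n k) :
    ¬ NAESatC σ c ↔ (∀ i b, c.1 i = some b → b = σ i) ∨ (∀ i b, c.1 i = some b → b = !σ i) := by
  unfold NAESatC
  rw [not_and_or, not_exists, not_exists]
  constructor
  · rintro (h | h)
    · right
      intro i b hb
      have hh := h i
      rw [hb] at hh
      have hne : b ≠ σ i := fun e => hh (by rw [e])
      revert hne
      cases b <;> cases σ i <;> decide
    · left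
      intro i b hb
      have hh := h i
      rw [hb] at hh
      have hne : b ≠ !σ i := fun e => hh (by rw [e])
      revert hne
      cases b <;> cases σ i <;> decide
  · rintro (h | h)
    · right
      intro i hi
      have hb := h i (!σ i) hi
      exact absurd hb.symm (by cases σ i <;> decide)
    · left
      intro i hi
      have hb := h i (σ i) hi
      exact absurd hb (by cases σ i <;> decide)

set_option maxHeartbeats 4000000 in
/-- The key Bonferroni counting estimate: the number `N` of clauses NAE-satisfied
by both `σ` and `τ` satisfies `N + 4 C(n,k) ≤ |C| + 2 C(a,k) + 2 C(n-a,k)` where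
`a` is the number of variables on which `σ` and `τ` agree. -/
lemma nae_card_pair_bound (n k : ℕ) (hk : 1 ≤ k) (σ τ : Fin n → Bool) :
    (Finset.univ.filter fun c : Clause n k => NAESatC σ c ∧ NAESatC τ c).card
        + 4 * n.choose k
      ≤ Fintype.card (Clause n k)
        + 2 * (((Finset.univ.filter fun i => σ i = τ i).card).choose k)
        + 2 * ((n - (Finset.univ.filter fun i => σ i = τ i).card).choose k) := by
  have hSdcard : (Finset.univ.filter fun i => ¬ σ i = τ i).card
      = n - (Finset.univ.filter fun i => σ i = τ i).card := by
    have h2 := Finset.card_filter_add_card_filter_not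
      (s := (Finset.univ : Finset (Fin n))) (p := fun i => σ i = τ i)
    rw [Finset.card_univ, Fintype.card_fin] at h2
    omega
  set Sa : Finset (Fin n) := Finset.univ.filter fun i => σ i = τ i with hSa
  set Sd : Finset (Fin n) := Finset.univ.filter fun i => ¬ σ i = τ i with hSd
  set A1 := Finset.univ.filter fun c : Clause n k => ∀ i b, c.1 i = some b → b = σ i with hA1
  set A2 := Finset.univ.filter fun c : Clause n k => ∀ i b, c.1 i = some b → b = !σ i with hA2
  set A3 := Finset.univ.filter fun c : Clause n k => ∀ i b, c.1 i = some b → b = τ i with hA3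
  set A4 := Finset.univ.filter fun c : Clause n k => ∀ i b, c.1 i = some b → b = !τ i with hA4
  -- complement decomposition
  have hcompl : (Finset.univ.filter fun c : Clause n k => ¬(NAESatC σ c ∧ NAESatC τ c))
      = (A1 ∪ A2) ∪ (A3 ∪ A4) := by
    ext c
    simp only [hA1, hA2, hA3, hA4, Finset.mem_union, Finset.mem_filter, Finset.mem_univ, true_and]
    rw [not_and_or, nae_not_nae, nae_not_nae]
  have hNplus : (Finset.univ.filter fun c : Clause n k => NAESatC σ c ∧ NAESatC τ c).card
      + ((A1 ∪ A2) ∪ (A3 ∪ A4)).card = Fintype.card (Clause n k) := by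
    have h3 := Finset.card_filter_add_card_filter_not
      (s := (Finset.univ : Finset (Clause n k))) (p := fun c => NAESatC σ c ∧ NAESatC τ c)
    rw [hcompl, Finset.card_univ] at h3
    exact h3
  -- cards of the two unions
  have hu12 : (A1 ∪ A2).card = 2 * n.choose k := by
    rw [hA1, hA2, Finset.card_union_of_disjoint
      (nae_forced_disjoint n k hk σ (fun i => !σ i) (fun i => by simp)),
      nae_card_forced n k σ, nae_card_forced n k (fun i => !σ i)]
    ring
  have hu34 : (A3 ∪ A4).card = 2 * n.choose k := by
    rw [hA3, hA4, Finset.card_union_of_disjoint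
      (nae_forced_disjoint n k hk τ (fun i => !τ i) (fun i => by simp)),
      nae_card_forced n k τ, nae_card_forced n k (fun i => !τ i)]
    ring
  have hsum := Finset.card_union_add_card_inter (A1 ∪ A2) (A3 ∪ A4)
  -- the four pairwise intersections
  have hfa : (Finset.univ.filter fun i : Fin n => σ i = !τ i) = Sd := by
    ext i
    simp only [hSd, Finset.mem_filter, Finset.mem_univ, true_and]
    cases hσ : σ i <;> cases hτ : τ i <;> simp
  have hfb : (Finset.univ.filter fun i : Fin n => (!σ i) = τ i) = Sd := by
    ext i
    simp only [hSd, Finset.mem_filter, Finset.mem_univ, true_and]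
    cases hσ : σ i <;> cases hτ : τ i <;> simp
  have hfc : (Finset.univ.filter fun i : Fin n => (!σ i) = !τ i) = Sa := by
    ext i
    simp only [hSa, Finset.mem_filter, Finset.mem_univ, true_and]
    cases hσ : σ i <;> cases hτ : τ i <;> simp
  have h13 : (A1 ∩ A3).card = Sa.card.choose k := by
    rw [hA1, hA3, nae_inter_forced, nae_card_det]
  have h14 : (A1 ∩ A4).card = Sd.card.choose k := by
    have := nae_inter_forced n k σ (fun i => !τ i)
    rw [hA1, hA4, this, nae_card_det]
    congr 1
    rw [← hfa]
  have h23 : (A2 ∩ A3).card = Sd.card.choose k := by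
    have := nae_inter_forced n k (fun i => !σ i) τ
    rw [hA2, hA3, this, nae_card_det]
    congr 1
    rw [← hfb]
  have h24 : (A2 ∩ A4).card = Sa.card.choose k := by
    have := nae_inter_forced n k (fun i => !σ i) (fun i => !τ i)
    rw [hA2, hA4, this, nae_card_det]
    congr 1
    rw [← hfc]
  -- bound on the intersection of the unions
  have hint : ((A1 ∪ A2) ∩ (A3 ∪ A4)).card
      ≤ 2 * Sa.card.choose k + 2 * Sd.card.choose k := by
    have hdistrib : (A1 ∪ A2) ∩ (A3 ∪ A4)
        = ((A1 ∩ A3) ∪ (A1 ∩ A4)) ∪ ((A2 ∩ A3) ∪ (A2 ∩ A4)) := by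
      ext c
      simp only [Finset.mem_inter, Finset.mem_union]
      tauto
    calc ((A1 ∪ A2) ∩ (A3 ∪ A4)).card
        = (((A1 ∩ A3) ∪ (A1 ∩ A4)) ∪ ((A2 ∩ A3) ∪ (A2 ∩ A4))).card := by rw [hdistrib]
      _ ≤ ((A1 ∩ A3) ∪ (A1 ∩ A4)).card + ((A2 ∩ A3) ∪ (A2 ∩ A4)).card :=
          Finset.card_union_le _ _
      _ ≤ ((A1 ∩ A3).card + (A1 ∩ A4).card) + ((A2 ∩ A3).card + (A2 ∩ A4).card) :=
          Nat.add_le_add (Finset.card_union_le _ _) (Finset.card_union_le _ _)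
      _ = 2 * Sa.card.choose k + 2 * Sd.card.choose k := by
          rw [h13, h14, h23, h24]; ring
  rw [hSdcard] at hint
  omega

set_option maxHeartbeats 4000000 in
/-- Upper bound on the number of clauses. -/
lemma nae_card_clause_le (n k : ℕ) :
    Fintype.card (Clause n k) ≤ 2 ^ k * n.choose k := by
  rw [← Finset.card_univ]
  rw [Finset.card_eq_sum_card_fiberwise
    (f := fun c : Clause n k => Finset.univ.filter fun i => (c.1 i).isSome)
    (t := Finset.powersetCard k Finset.univ)
    (fun c _ => by
      rw [Finset.mem_coe, Finset.mem_powersetCard]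
      exact ⟨Finset.filter_subset _ _ |>.trans (by simp), c.2⟩)]
  calc ∑ s ∈ Finset.powersetCard k (Finset.univ : Finset (Fin n)),
        (Finset.univ.filter fun c : Clause n k =>
          (Finset.univ.filter fun i => (c.1 i).isSome) = s).card
      ≤ ∑ _s ∈ Finset.powersetCard k (Finset.univ : Finset (Fin n)), 2 ^ k := by
        refine Finset.sum_le_sum fun s hs => ?_
        have hscard : s.card = k := (Finset.mem_powersetCard.mp hs).2
        have : (Finset.univ.filter fun c : Clause n k =>
            (Finset.univ.filter fun i => (c.1 i).isSome) = s).card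
            ≤ (Finset.univ : Finset ({i // i ∈ s} → Bool)).card := by
          refine Finset.card_le_card_of_injOn
            (fun c => fun i : {i // i ∈ s} => ((c : Clause n k).1 i.1).getD true)
            (fun _ _ => Finset.mem_univ _) ?_
          intro c hc c' hc' hcc
          have hcs := (Finset.mem_filter.mp hc).2
          have hcs' := (Finset.mem_filter.mp hc').2
          apply Subtype.ext; funext i
          by_cases h : i ∈ s
          · have hi : (c.1 i).isSome := by
              have : i ∈ Finset.univ.filter fun i => (c.1 i).isSome := by rw [hcs]; exact h
              exact (Finset.mem_filter.mp this).2
            have hi' : (c'.1 i).isSome := by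
              have : i ∈ Finset.univ.filter fun i => (c'.1 i).isSome := by rw [hcs']; exact h
              exact (Finset.mem_filter.mp this).2
            obtain ⟨b, hb⟩ := Option.isSome_iff_exists.mp hi
            obtain ⟨b', hb'⟩ := Option.isSome_iff_exists.mp hi'
            have := congrFun hcc ⟨i, h⟩
            simp only [hb, hb', Option.getD_some] at this
            rw [hb, hb', this]
          · have hi : ¬ (c.1 i).isSome := by
              intro hcon
              have : i ∈ Finset.univ.filter fun i => (c.1 i).isSome := by
                simp only [Finset.mem_filter, Finset.mem_univ, true_and]; exact hcon
              rw [hcs] at this; exact h this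
            have hi' : ¬ (c'.1 i).isSome := by
              intro hcon
              have : i ∈ Finset.univ.filter fun i => (c'.1 i).isSome := by
                simp only [Finset.mem_filter, Finset.mem_univ, true_and]; exact hcon
              rw [hcs'] at this; exact h this
            rw [Option.not_isSome_iff_eq_none.mp hi, Option.not_isSome_iff_eq_none.mp hi']
        refine this.trans ?_
        rw [Finset.card_univ]
        rw [show Fintype.card ({i // i ∈ s} → Bool) = 2 ^ s.card by
          simp [Fintype.card_fun]]
        rw [hscard]
    _ = 2 ^ k * n.choose k := by
        rw [Finset.sum_const, Finset.card_powersetCard, Finset.card_univ, Fintype.card_fin,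
          smul_eq_mul, mul_comm]

/-- Monotone ratio bound for binomial coefficients: `C(a,k)/C(n,k) ≤ (a/n)^k`. -/
lemma nae_choose_ratio (a n k : ℕ) (h : a ≤ n) :
    a.choose k * n ^ k ≤ n.choose k * a ^ k := by
  have hd : a.descFactorial k * n ^ k ≤ n.descFactorial k * a ^ k := by
    have hrw : ∀ x N : ℕ, (∏ i ∈ Finset.range k, (x - i)) * N ^ k
        = ∏ i ∈ Finset.range k, ((x - i) * N) := by
      intro x N
      rw [Finset.prod_mul_distrib, Finset.prod_const, Finset.card_range]
    rw [Nat.descFactorial_eq_prod_range, Nat.descFactorial_eq_prod_range, hrw, hrw]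
    refine Finset.prod_le_prod' fun i _ => ?_
    calc (a - i) * n = a * n - i * n := by rw [Nat.sub_mul]
      _ ≤ a * n - i * a := Nat.sub_le_sub_left (Nat.mul_le_mul_left i h) _
      _ = (n - i) * a := by rw [Nat.sub_mul, Nat.mul_comm a n]
  rw [Nat.descFactorial_eq_factorial_mul_choose, Nat.descFactorial_eq_factorial_mul_choose] at hd
  have hfac : 0 < k.factorial := Nat.factorial_pos k
  rw [Nat.mul_assoc, Nat.mul_assoc] at hd
  exact Nat.le_of_mul_le_mul_left hd hfac

/-- The real per-pair bound: `N(σ,τ) ≤ |C| · f(a/n)`. -/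
lemma nae_pair_real_bound (n k : ℕ) (hk : 2 ≤ k) (hn : k ≤ n) (σ τ : Fin n → Bool) :
    ((Finset.univ.filter fun c : Clause n k => NAESatC σ c ∧ NAESatC τ c).card : ℝ)
      ≤ (Fintype.card (Clause n k) : ℝ) *
          fPair k (((Finset.univ.filter fun i => σ i = τ i).card : ℝ) / n) := by
  have hn0 : 0 < n := lt_of_lt_of_le (by omega) hn
  have hn0R : (0:ℝ) < n := by exact_mod_cast hn0
  set a : ℕ := (Finset.univ.filter fun i => σ i = τ i).card with ha
  have han : a ≤ n := le_trans (Finset.card_filter_le _ _) (by simp)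
  set α : ℝ := (a : ℝ) / n with hα
  have hα0 : 0 ≤ α := by positivity
  have hα1 : α ≤ 1 := by
    rw [hα, div_le_one hn0R]; exact_mod_cast han
  have h1α : 1 - α = ((n - a : ℕ) : ℝ) / n := by
    rw [hα, Nat.cast_sub han, sub_div, div_self hn0R.ne']
  -- main counting bound, cast to ℝ
  have hmain : ((Finset.univ.filter fun c : Clause n k =>
        NAESatC σ c ∧ NAESatC τ c).card : ℝ) + 4 * n.choose k
      ≤ (Fintype.card (Clause n k) : ℝ) + 2 * (a.choose k : ℝ) + 2 * ((n - a).choose k : ℝ) := by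
    exact_mod_cast nae_card_pair_bound n k (by omega) σ τ
  -- choose ratio bounds, cast to ℝ
  have hCa : (a.choose k : ℝ) ≤ (n.choose k : ℝ) * α ^ k := by
    rw [hα, div_pow, mul_div_assoc', le_div_iff₀ (by positivity)]
    exact_mod_cast nae_choose_ratio a n k han
  have hCd : ((n - a).choose k : ℝ) ≤ (n.choose k : ℝ) * (1 - α) ^ k := by
    rw [h1α, div_pow, mul_div_assoc', le_div_iff₀ (by positivity)]
    exact_mod_cast nae_choose_ratio (n - a) n k (Nat.sub_le n a)
  -- card bound
  have hT : (Fintype.card (Clause n k) : ℝ) ≤ 2 ^ k * (n.choose k : ℝ) := by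
    exact_mod_cast nae_card_clause_le n k
  have hT0 : (0:ℝ) ≤ (Fintype.card (Clause n k) : ℝ) := by positivity
  -- nonnegativity of the "excess" term
  have hE0 : (0:ℝ) ≤ 2 - α ^ k - (1 - α) ^ k := by
    have h1 : α ^ k ≤ 1 := pow_le_one₀ hα0 hα1
    have h2 : (1 - α) ^ k ≤ 1 := pow_le_one₀ (by linarith) (by linarith)
    linarith
  have hpow : (2:ℝ) ^ (1 - (k:ℤ)) = 2 * ((2:ℝ) ^ k)⁻¹ := by
    rw [zpow_sub₀ (by norm_num), zpow_one, zpow_natCast]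
    ring
  rw [fPair, hpow]
  have h2k : (0:ℝ) < 2 ^ k := by positivity
  -- the excess term is bounded
  have hexcess : 2 * ((2:ℝ) ^ k)⁻¹ * (2 - α ^ k - (1 - α) ^ k) * (Fintype.card (Clause n k) : ℝ)
      ≤ 2 * (n.choose k : ℝ) * (2 - α ^ k - (1 - α) ^ k) := by
    calc 2 * ((2:ℝ) ^ k)⁻¹ * (2 - α ^ k - (1 - α) ^ k) * (Fintype.card (Clause n k) : ℝ)
        ≤ 2 * ((2:ℝ) ^ k)⁻¹ * (2 - α ^ k - (1 - α) ^ k) * (2 ^ k * (n.choose k : ℝ)) := by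
          refine mul_le_mul_of_nonneg_left hT (by positivity)
      _ = 2 * (n.choose k : ℝ) * (2 - α ^ k - (1 - α) ^ k) := by
          field_simp
  nlinarith [hmain, hCa, hCd, hexcess]

/-- The second moment as a sum over pairs of assignments. -/
lemma nae_sum_sq_eq (n k m : ℕ) :
    (∑ F : Fin m → Clause n k, (numNAE F : ℝ) ^ 2)
      = ∑ σ : Fin n → Bool, ∑ τ : Fin n → Bool,
          ((Finset.univ.filter fun c : Clause n k =>
            NAESatC σ c ∧ NAESatC τ c).card : ℝ) ^ m := by
  have hnum : ∀ F : Fin m → Clause n k, (numNAE F : ℝ)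
      = ∑ σ : Fin n → Bool, if ∀ j, NAESatC σ (F j) then (1:ℝ) else 0 := by
    intro F
    rw [Finset.sum_boole, numNAE]
  calc (∑ F : Fin m → Clause n k, (numNAE F : ℝ) ^ 2)
      = ∑ F : Fin m → Clause n k, ∑ σ : Fin n → Bool, ∑ τ : Fin n → Bool,
          (if ∀ j, NAESatC σ (F j) ∧ NAESatC τ (F j) then (1:ℝ) else 0) := by
        refine Finset.sum_congr rfl fun F _ => ?_
        rw [hnum, sq, Finset.sum_mul_sum]
        refine Finset.sum_congr rfl fun σ _ => Finset.sum_congr rfl fun τ _ => ?_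
        by_cases h1 : ∀ j, NAESatC σ (F j) <;> by_cases h2 : ∀ j, NAESatC τ (F j) <;>
          simp [h1, h2, forall_and]
    _ = ∑ σ : Fin n → Bool, ∑ τ : Fin n → Bool, ∑ F : Fin m → Clause n k,
          (if ∀ j, NAESatC σ (F j) ∧ NAESatC τ (F j) then (1:ℝ) else 0) := by
        rw [Finset.sum_comm]
        exact Finset.sum_congr rfl fun σ _ => Finset.sum_comm
    _ = ∑ σ : Fin n → Bool, ∑ τ : Fin n → Bool,
          ((Finset.univ.filter fun c : Clause n k =>
            NAESatC σ c ∧ NAESatC τ c).card : ℝ) ^ m := by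
        refine Finset.sum_congr rfl fun σ _ => Finset.sum_congr rfl fun τ _ => ?_
        have h1 : ∀ F : Fin m → Clause n k,
            (if ∀ j, NAESatC σ (F j) ∧ NAESatC τ (F j) then (1:ℝ) else 0)
            = ∏ j : Fin m, (if NAESatC σ (F j) ∧ NAESatC τ (F j) then (1:ℝ) else 0) := by
          intro F
          by_cases h : ∀ j, NAESatC σ (F j) ∧ NAESatC τ (F j)
          · rw [if_pos h, Finset.prod_congr rfl fun j _ => if_pos (h j),
              Finset.prod_const_one]
          · obtain ⟨j0, hj0⟩ := not_forall.mp h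
            rw [if_neg h]
            exact (Finset.prod_eq_zero (Finset.mem_univ j0)
              (if_neg hj0 :
                (if NAESatC σ (F j0) ∧ NAESatC τ (F j0) then (1:ℝ) else 0) = 0)).symm
        rw [Finset.sum_congr rfl fun F _ => h1 F]
        rw [show (∑ F : Fin m → Clause n k, ∏ j : Fin m,
              (if NAESatC σ (F j) ∧ NAESatC τ (F j) then (1:ℝ) else 0))
            = (∑ c : Clause n k, if NAESatC σ c ∧ NAESatC τ c then (1:ℝ) else 0) ^ m from
          (Fintype.sum_pow (fun c : Clause n k =>
            if NAESatC σ c ∧ NAESatC τ c then (1:ℝ) else 0) m).symm]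
        rw [Finset.sum_boole]

/-- Grouping the sum over the second assignment by the number of agreements. -/
lemma nae_sum_agree (n : ℕ) (σ : Fin n → Bool) (G : ℕ → ℝ) :
    (∑ τ : Fin n → Bool, G ((Finset.univ.filter fun i => σ i = τ i).card))
      = ∑ z ∈ Finset.range (n + 1), (n.choose z : ℝ) * G z := by
  have h1 : (∑ τ : Fin n → Bool, G ((Finset.univ.filter fun i => σ i = τ i).card))
      = ∑ S ∈ (Finset.univ : Finset (Fin n)).powerset, G S.card := by
    refine Finset.sum_nbij' (fun τ => Finset.univ.filter fun i => σ i = τ i)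
      (fun S => fun i => if i ∈ S then σ i else !σ i) ?_ ?_ ?_ ?_ ?_
    · intro τ _
      exact Finset.mem_powerset.mpr (Finset.filter_subset _ _)
    · intro S _
      exact Finset.mem_univ _
    · intro τ _
      funext i
      beta_reduce
      by_cases h : σ i = τ i
      · rw [if_pos (by simp only [Finset.mem_filter, Finset.mem_univ, true_and]; exact h)]
        exact h
      · rw [if_neg (by simp only [Finset.mem_filter, Finset.mem_univ, true_and]; exact h)]
        cases hσ : σ i <;> cases hτ : τ i <;> simp_all
    · intro S _
      ext i
      simp only [Finset.mem_filter, Finset.mem_univ, true_and]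
      beta_reduce
      split_ifs with h <;> simp [h]
    · intro τ _
      rfl
  rw [h1, Finset.sum_powerset_apply_card, Finset.card_univ, Fintype.card_fin]
  refine Finset.sum_congr rfl fun z _ => ?_
  rw [nsmul_eq_mul]

/-- There is at least one clause when `k ≤ n`. -/
lemma nae_clause_nonempty (n k : ℕ) (hn : k ≤ n) : Nonempty (Clause n k) := by
  have hpos : 0 < Fintype.card {s : Finset (Fin n) // s.card = k} := by
    rw [Fintype.card_finset_len, Fintype.card_fin]
    exact Nat.choose_pos hn
  obtain ⟨s, hs⟩ := (Fintype.card_pos_iff.mp hpos)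
  refine ⟨⟨fun i => if i ∈ s then some true else none, ?_⟩⟩
  rw [show (Finset.univ.filter fun i => (if i ∈ s then some true else none).isSome) = s by
    ext i; simp only [Finset.mem_filter, Finset.mem_univ, true_and]
    split_ifs with h <;> simp [h]]
  exact hs

/-- **Second moment for NAE `k`-SAT.** For `k ≥ 2`, `n ≥ k`, `m ≥ 1`,
`E[X²] ≤ 2^n ∑_{z=0}^n C(n,z) f(z/n)^m` where `X` is the number of
NAE-satisfying assignments of `F_k(n,m)`; equivalently, the sum over all
`m`-tuples of clauses of `X(F)²` is at most `|C_k(n)|^m` times that bound. -/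
theorem nae_ksat_second_moment (k n m : ℕ) (hk : 2 ≤ k) (hn : k ≤ n) (hm : 1 ≤ m) :
    (∑ F : Fin m → Clause n k, (numNAE F : ℝ) ^ 2) / (Fintype.card (Fin m → Clause n k) : ℝ)
        ≤ 2 ^ n * ∑ z ∈ Finset.range (n + 1), (n.choose z : ℝ) * fPair k ((z : ℝ) / n) ^ m ∧
    (∑ F : Fin m → Clause n k, (numNAE F : ℝ) ^ 2)
        ≤ (Fintype.card (Clause n k) : ℝ) ^ m *
            (2 ^ n * ∑ z ∈ Finset.range (n + 1), (n.choose z : ℝ) * fPair k ((z : ℝ) / n) ^ m) := by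
  set T : ℝ := (Fintype.card (Clause n k) : ℝ) with hT
  have hT0 : 0 ≤ T := by positivity
  -- the second part
  have part2 : (∑ F : Fin m → Clause n k, (numNAE F : ℝ) ^ 2)
      ≤ T ^ m * (2 ^ n * ∑ z ∈ Finset.range (n + 1),
          (n.choose z : ℝ) * fPair k ((z : ℝ) / n) ^ m) := by
    rw [nae_sum_sq_eq]
    have step1 : ∀ σ : Fin n → Bool,
        (∑ τ : Fin n → Bool, ((Finset.univ.filter fun c : Clause n k =>
            NAESatC σ c ∧ NAESatC τ c).card : ℝ) ^ m)
        ≤ ∑ z ∈ Finset.range (n + 1),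
            (n.choose z : ℝ) * (T * fPair k ((z : ℝ) / n)) ^ m := by
      intro σ
      have hb : ∀ τ : Fin n → Bool,
          ((Finset.univ.filter fun c : Clause n k =>
            NAESatC σ c ∧ NAESatC τ c).card : ℝ) ^ m
          ≤ (T * fPair k ((((Finset.univ.filter fun i => σ i = τ i).card : ℕ) : ℝ) / n)) ^ m := by
        intro τ
        exact pow_le_pow_left₀ (by positivity) (nae_pair_real_bound n k hk hn σ τ) m
      calc (∑ τ : Fin n → Bool, ((Finset.univ.filter fun c : Clause n k =>
              NAESatC σ c ∧ NAESatC τ c).card : ℝ) ^ m)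
          ≤ ∑ τ : Fin n → Bool,
              (T * fPair k ((((Finset.univ.filter fun i => σ i = τ i).card : ℕ) : ℝ) / n)) ^ m :=
            Finset.sum_le_sum fun τ _ => hb τ
        _ = ∑ z ∈ Finset.range (n + 1),
              (n.choose z : ℝ) * (T * fPair k ((z : ℝ) / n)) ^ m :=
            nae_sum_agree n σ (fun z => (T * fPair k ((z : ℝ) / n)) ^ m)
    calc (∑ σ : Fin n → Bool, ∑ τ : Fin n → Bool,
            ((Finset.univ.filter fun c : Clause n k =>
              NAESatC σ c ∧ NAESatC τ c).card : ℝ) ^ m)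
        ≤ ∑ _σ : Fin n → Bool, ∑ z ∈ Finset.range (n + 1),
            (n.choose z : ℝ) * (T * fPair k ((z : ℝ) / n)) ^ m :=
          Finset.sum_le_sum fun σ _ => step1 σ
      _ = 2 ^ n * ∑ z ∈ Finset.range (n + 1),
            (n.choose z : ℝ) * (T * fPair k ((z : ℝ) / n)) ^ m := by
          rw [Finset.sum_const, Finset.card_univ]
          rw [show Fintype.card (Fin n → Bool) = 2 ^ n by simp [Fintype.card_fun]]
          rw [nsmul_eq_mul]
          push_cast
          ring
      _ = T ^ m * (2 ^ n * ∑ z ∈ Finset.range (n + 1),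
            (n.choose z : ℝ) * fPair k ((z : ℝ) / n) ^ m) := by
          rw [Finset.mul_sum, Finset.mul_sum, Finset.mul_sum]
          refine Finset.sum_congr rfl fun z _ => ?_
          rw [mul_pow]
          ring
  refine ⟨?_, part2⟩
  -- part 1 follows by dividing
  have : Nonempty (Clause n k) := nae_clause_nonempty n k hn
  have hpos : (0:ℝ) < (Fintype.card (Fin m → Clause n k) : ℝ) := by
    exact_mod_cast Fintype.card_pos
  rw [div_le_iff₀ hpos]
  have hcard : ((Fintype.card (Fin m → Clause n k) : ℕ) : ℝ) = T ^ m := by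
    rw [hT, ← Nat.cast_pow]
    congr 1
    rw [Fintype.card_fun, Fintype.card_fin]
  calc (∑ F : Fin m → Clause n k, (numNAE F : ℝ) ^ 2)
      ≤ T ^ m * (2 ^ n * ∑ z ∈ Finset.range (n + 1),
          (n.choose z : ℝ) * fPair k ((z : ℝ) / n) ^ m) := part2
    _ = (2 ^ n * ∑ z ∈ Finset.range (n + 1),
          (n.choose z : ℝ) * fPair k ((z : ℝ) / n) ^ m) *
          (Fintype.card (Fin m → Clause n k) : ℝ) := by
        rw [hcard]; ring
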